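/- Reading off the (2,2) block of the identity M^T M = T^T T for the square-root covariance update: with P = (P^r)^T P^r, R = (R^r)^T R^r > 0, Q = (Q^r)^T Q^r, and S = u^T P u + R, the propagated factor satisfies (P₊^r)^T P₊^r = P − (P u)(P u)^T/S + Q, i.e., the square-root update reproduces the Joseph-form covariance propagation ψ(u, K, P) with Kalman gain K = P u / S. -/

import Mathlib

open Matrix

private lemma vmv_mul' {n : ℕ} (a b : Fin n → ℝ) (P : Matrix (Fin n) (Fin n) ℝ) :
    vecMulVec a b * P = vecMulVec a (b ᵥ* P) := by
  ext i j
  simp [Matrix.mul_apply, vecMulVec_apply, vecMul, dotProduct, Finset.mul_sum, mul_assoc]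

private lemma mul_vmv' {n : ℕ} (a b : Fin n → ℝ) (P : Matrix (Fin n) (Fin n) ℝ) :
    P * vecMulVec a b = vecMulVec (P *ᵥ a) b := by
  ext i j
  simp only [Matrix.mul_apply, vecMulVec_apply, mulVec, dotProduct, Finset.sum_mul]
  exact Finset.sum_congr rfl fun k _ => by ring

private lemma vmv_transpose' {n : ℕ} (a b : Fin n → ℝ) :
    (vecMulVec a b)ᵀ = vecMulVec b a := by
  ext i j; simp [vecMulVec_apply, mul_comm]

private lemma vmv_mul_vmv' {n : ℕ} (a b c d : Fin n → ℝ) :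
    vecMulVec a b * vecMulVec c d = (b ⬝ᵥ c) • vecMulVec a d := by
  rw [vmv_mul']
  ext i j
  simp [vecMulVec_apply, vecMul, dotProduct, Finset.sum_mul, Finset.mul_sum]
  ring_nf
  exact Finset.sum_congr rfl fun k _ => by ring

private lemma smul_vmv' {n : ℕ} (r : ℝ) (a b : Fin n → ℝ) :
    vecMulVec (r • a) b = r • vecMulVec a b := by
  ext i j; simp [vecMulVec_apply, mul_assoc]

private lemma vmv_smul' {n : ℕ} (r : ℝ) (a b : Fin n → ℝ) :
    vecMulVec a (r • b) = r • vecMulVec a b := by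
  ext i j; simp [vecMulVec_apply]; ring

private lemma joseph_eq {n : ℕ} (u : Fin n → ℝ) (P : Matrix (Fin n) (Fin n) ℝ)
    (R S : ℝ) (K : Fin n → ℝ)
    (hsym : Pᵀ = P) (hS : S = u ⬝ᵥ P *ᵥ u + R) (hK : K = S⁻¹ • (P *ᵥ u)) (hSpos : 0 < S) :
    P - S⁻¹ • vecMulVec (P *ᵥ u) (P *ᵥ u) =
      (1 - vecMulVec K u) * P * (1 - vecMulVec K u)ᵀ + R • vecMulVec K K := by
  have hSne : S ≠ 0 := ne_of_gt hSpos
  have hvP : u ᵥ* P = P *ᵥ u := by rw [← hsym, vecMul_transpose, hsym]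
  rw [Matrix.transpose_sub, Matrix.transpose_one, vmv_transpose']
  simp only [Matrix.sub_mul, Matrix.mul_sub, Matrix.one_mul, Matrix.mul_one]
  rw [vmv_mul', mul_vmv', vmv_mul_vmv', hvP]
  have hdot : (P *ᵥ u) ⬝ᵥ u = S - R := by
    rw [dotProduct_comm]; rw [hS]; ring
  rw [hdot, hK, smul_vmv', vmv_smul', smul_vmv', vmv_smul', smul_smul, smul_smul, smul_smul,
    smul_smul]
  ext i j
  simp only [Matrix.sub_apply, Matrix.add_apply, Matrix.smul_apply, vecMulVec_apply,
    smul_eq_mul]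
  field_simp
  ring

/-- Reading off the (2,2) block of `MᵀM = TᵀT` for the square-root covariance update:
with `P = (Pʳ)ᵀPʳ`, `R = (Rʳ)² > 0`, `Q = (Qʳ)ᵀQʳ` and `S = uᵀPu + R`, the propagated factor
satisfies `(P₊ʳ)ᵀP₊ʳ = P − (Pu)(Pu)ᵀ/S + Q`, i.e., the square-root update reproduces the
Joseph-form covariance propagation with Kalman gain `K = Pu/S`. -/
theorem sqrt_kalman_update_reproduces_joseph {n : ℕ}
    (Pr Qr : Matrix (Fin n) (Fin n) ℝ) (Rr : ℝ) (u : Fin n → ℝ)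
    (P Q : Matrix (Fin n) (Fin n) ℝ) (R S : ℝ) (K : Fin n → ℝ)
    (hP : P = Prᵀ * Pr) (hQ : Q = Qrᵀ * Qr) (hR : R = Rr ^ 2) (hRpos : 0 < R)
    (hS : S = u ⬝ᵥ P *ᵥ u + R) (hK : K = S⁻¹ • (P *ᵥ u))
    (Sr : ℝ) (Pp : Matrix (Fin n) (Fin n) ℝ)
    (QF : Matrix ((Fin 1 ⊕ Fin n) ⊕ Fin n) ((Fin 1 ⊕ Fin n) ⊕ Fin n) ℝ)
    (M T : Matrix ((Fin 1 ⊕ Fin n) ⊕ Fin n) (Fin 1 ⊕ Fin n) ℝ)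
    (hM : M = fromRows
      (fromBlocks (Matrix.of fun (_ : Fin 1) (_ : Fin 1) => Rr) 0
        (Matrix.of fun i (_ : Fin 1) => (Pr *ᵥ u) i) Pr)
      (fromCols (0 : Matrix (Fin n) (Fin 1) ℝ) Qr))
    (hT : T = fromRows
      (fromBlocks (Matrix.of fun (_ : Fin 1) (_ : Fin 1) => Sr)
        (Matrix.of fun (_ : Fin 1) j => (P *ᵥ u) j / Sr) 0 Pp) 0)
    (hQF : QFᵀ * QF = 1) (hfact : M = QF * T) :
    Ppᵀ * Pp = P - S⁻¹ • vecMulVec (P *ᵥ u) (P *ᵥ u) + Q ∧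
    Ppᵀ * Pp = (1 - vecMulVec K u) * P * (1 - vecMulVec K u)ᵀ + R • vecMulVec K K + Q := by
  have key : Mᵀ * M = Tᵀ * T := by
    rw [hfact, transpose_mul, ← Matrix.mul_assoc, Matrix.mul_assoc Tᵀ, hQF, Matrix.mul_one]
  have hPu : u ⬝ᵥ P *ᵥ u = (Pr *ᵥ u) ⬝ᵥ (Pr *ᵥ u) := by
    rw [hP, dotProduct_mulVec, ← vecMul_vecMul, vecMul_transpose, ← dotProduct_mulVec]
  have hSpos : 0 < S := by
    rw [hS, hPu]
    have : 0 ≤ (Pr *ᵥ u) ⬝ᵥ (Pr *ᵥ u) := Finset.sum_nonneg fun i _ => mul_self_nonneg _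
    linarith
  have h11 := congrFun (congrFun key (Sum.inl (0 : Fin 1))) (Sum.inl (0 : Fin 1))
  simp [hM, hT, Matrix.mul_apply, Fintype.sum_sum_type] at h11
  have hSr2 : Sr * Sr = S := by
    rw [hS, hPu, hR, ← h11]; simp [dotProduct]; ring
  have h1 : Ppᵀ * Pp = P - S⁻¹ • vecMulVec (P *ᵥ u) (P *ᵥ u) + Q := by
    ext i j
    have h := congrFun (congrFun key (Sum.inr i)) (Sum.inr j)
    simp [hM, hT, Matrix.mul_apply, Fintype.sum_sum_type] at h
    rw [div_mul_div_comm, hSr2, div_eq_inv_mul] at h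
    have hPij : P i j = ∑ x, Pr x i * Pr x j := by rw [hP]; simp [Matrix.mul_apply]
    have hQij : Q i j = ∑ x, Qr x i * Qr x j := by rw [hQ]; simp [Matrix.mul_apply]
    rw [← hPij, ← hQij] at h
    simp only [Matrix.mul_apply, Matrix.sub_apply, Matrix.add_apply, Matrix.smul_apply,
      Matrix.vecMulVec_apply, Matrix.transpose_apply, smul_eq_mul]
    linarith [h]
  refine ⟨h1, ?_⟩
  have hsym : Pᵀ = P := by rw [hP, transpose_mul, transpose_transpose]
  rw [h1, joseph_eq u P R S K hsym hS hK hSpos]
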